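/- Let n ≥ 2 and let S_n(Sym_n) be the monoid presented by generators x_1,…,x_n and relations x_{σ(1)}x_{σ(2)}⋯x_{σ(n)} = x_1x_2⋯x_n for all σ ∈ Sym_n. Then for any two words u, v in the free monoid on x_1,…,x_n whose letters all lie in {x_2,…,x_n} and which are rearrangements of each other (i.e., every generator occurs in u and in v the same number of times), the identity x_ε·u = x_ε·v holds in S_n(Sym_n), where x_ε = x_1x_2⋯x_n. -/

import Mathlib

/-- The word `x_{σ(1)} x_{σ(2)} ⋯ x_{σ(n)}` in the free monoid on `n` generators
(generator `x_j` is indexed by `j-1 : Fin n`). -/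
def permWord {n : ℕ} (σ : Equiv.Perm (Fin n)) : FreeMonoid (Fin n) :=
  FreeMonoid.ofList (List.ofFn fun i => σ i)

/-- The word `x_ε = x_1 x_2 ⋯ x_n`. -/
def epsWord (n : ℕ) : FreeMonoid (Fin n) :=
  FreeMonoid.ofList (List.ofFn fun i : Fin n => i)

/-- The defining relations `x_{σ(1)} ⋯ x_{σ(n)} = x_1 ⋯ x_n`, `σ ∈ Sym_n`. -/
def symRel (n : ℕ) : FreeMonoid (Fin n) → FreeMonoid (Fin n) → Prop :=
  fun a b => ∃ σ : Equiv.Perm (Fin n), a = permWord σ ∧ b = epsWord n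

/-- The canonical projection from the free monoid onto `S_n(Sym_n)`. -/
def proj (n : ℕ) : FreeMonoid (Fin n) →* PresentedMonoid (symRel n) :=
  PresentedMonoid.mk (symRel n)

/-- `u` contains a subword of the form `x_{σ(1)} ⋯ x_{σ(n)}` for some `σ ∈ Sym_n`. -/
def HasPermSubword {n : ℕ} (u : FreeMonoid (Fin n)) : Prop :=
  ∃ (σ : Equiv.Perm (Fin n)) (a b : FreeMonoid (Fin n)), u = a * permWord σ * b

/-- The word `x_1^{m_1} · x_ε · x_2^{m_2} ⋯ x_n^{m_n}` (0-indexed: `m i` is the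
exponent of generator `i`). -/
def normalWord (n : ℕ) (h : 0 < n) (m : Fin n → ℕ) : FreeMonoid (Fin n) :=
  FreeMonoid.ofList (List.replicate (m ⟨0, h⟩) ⟨0, h⟩) * epsWord n *
    FreeMonoid.ofList (((List.finRange n).drop 1).flatMap fun i => List.replicate (m i) i)

section Aux

variable {n : ℕ}

private lemma key_aux (n : ℕ) (l : List (Fin n)) (hnd : l.Nodup) (hl : l.length = n) :
    proj n (FreeMonoid.ofList l) = proj n (epsWord n) := by
  have hf : Function.Injective (fun i : Fin n => l.get (Fin.cast hl.symm i)) := by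
    intro i j hij
    have h2 := List.nodup_iff_injective_get.mp hnd hij
    have h3 := congrArg Fin.val h2
    exact Fin.ext h3
  let σ : Equiv.Perm (Fin n) := Equiv.ofBijective _ (Finite.injective_iff_bijective.mp hf)
  have hpw : permWord σ = FreeMonoid.ofList l := by
    unfold permWord
    congr 1
    apply List.ext_get (by simpa using hl.symm)
    intro i h1 h2
    simp [σ, Equiv.ofBijective]
  rw [← hpw]
  exact Quotient.sound (ConGen.Rel.of _ _ ⟨σ, rfl, rfl⟩)

private lemma P_append (l1 l2 : List (Fin n)) :
    proj n (FreeMonoid.ofList (l1 ++ l2)) =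
      proj n (FreeMonoid.ofList l1) * proj n (FreeMonoid.ofList l2) :=
  map_mul (proj n) (FreeMonoid.ofList l1) (FreeMonoid.ofList l2)

private lemma key_perm {l : List (Fin n)} (h : (List.finRange n).Perm l) :
    proj n (FreeMonoid.ofList l) = proj n (epsWord n) :=
  key_aux n l (h.nodup (List.nodup_finRange n)) (h.length_eq.symm.trans List.length_finRange)

private lemma central (a : Fin n) :
    proj n (epsWord n) * proj n (FreeMonoid.ofList [a]) =
      proj n (FreeMonoid.ofList [a]) * proj n (epsWord n) := by
  set w := (List.finRange n).erase a with hw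
  have hp1 : (List.finRange n).Perm (a :: w) := List.perm_cons_erase (List.mem_finRange a)
  have hp2 : (List.finRange n).Perm (w ++ [a]) := hp1.trans (List.perm_cons_append_cons a (by simp))
  calc proj n (epsWord n) * proj n (FreeMonoid.ofList [a])
      = proj n (FreeMonoid.ofList (a :: w)) * proj n (FreeMonoid.ofList [a]) := by
        rw [key_perm hp1]
    _ = proj n (FreeMonoid.ofList [a]) * (proj n (FreeMonoid.ofList w) *
          proj n (FreeMonoid.ofList [a])) := by
        rw [show (a :: w) = [a] ++ w from rfl, P_append, mul_assoc]
    _ = proj n (FreeMonoid.ofList [a]) * proj n (FreeMonoid.ofList (w ++ [a])) := by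
        rw [P_append]
    _ = proj n (FreeMonoid.ofList [a]) * proj n (epsWord n) := by rw [key_perm hp2]

private lemma central_word (l : List (Fin n)) :
    proj n (epsWord n) * proj n (FreeMonoid.ofList l) =
      proj n (FreeMonoid.ofList l) * proj n (epsWord n) := by
  induction l with
  | nil =>
      rw [show FreeMonoid.ofList ([] : List (Fin n)) = 1 from rfl, map_one, mul_one, one_mul]
  | cons a t ih =>
      rw [show (a :: t) = [a] ++ t from rfl, P_append, ← mul_assoc, central a, mul_assoc, ih,
        ← mul_assoc]

private lemma eps_swap (a b : Fin n) :
    proj n (epsWord n) * proj n (FreeMonoid.ofList [a, b]) =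
      proj n (epsWord n) * proj n (FreeMonoid.ofList [b, a]) := by
  rcases eq_or_ne a b with rfl | hab
  · rfl
  set R := ((List.finRange n).erase a).erase b with hR
  have hb : b ∈ (List.finRange n).erase a := List.mem_erase_of_ne hab.symm |>.mpr (by simp)
  have hp0 : (List.finRange n).Perm (a :: b :: R) :=
    (List.perm_cons_erase (List.mem_finRange a)).trans ((List.perm_cons_erase hb).cons a)
  have hp1 : (List.finRange n).Perm (b :: a :: R) := hp0.trans (List.Perm.swap b a R)
  have hpab : (List.finRange n).Perm (R ++ [a, b]) := hp0.trans (List.perm_append_comm (l₁ := [a, b]) (l₂ := R))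
  have hpba : (List.finRange n).Perm (R ++ [b, a]) := hp1.trans (List.perm_append_comm (l₁ := [b, a]) (l₂ := R))
  calc proj n (epsWord n) * proj n (FreeMonoid.ofList [a, b])
      = proj n (FreeMonoid.ofList (b :: a :: R)) * proj n (FreeMonoid.ofList [a, b]) := by
        rw [key_perm hp1]
    _ = proj n (FreeMonoid.ofList [b, a]) * (proj n (FreeMonoid.ofList R) *
          proj n (FreeMonoid.ofList [a, b])) := by
        rw [show (b :: a :: R) = [b, a] ++ R from rfl, P_append, mul_assoc]
    _ = proj n (FreeMonoid.ofList [b, a]) * proj n (FreeMonoid.ofList (R ++ [a, b])) := by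
        rw [P_append]
    _ = proj n (FreeMonoid.ofList [b, a]) * proj n (FreeMonoid.ofList (R ++ [b, a])) := by
        rw [key_perm hpab, key_perm hpba]
    _ = proj n (FreeMonoid.ofList (b :: a :: R)) * proj n (FreeMonoid.ofList [b, a]) := by
        rw [P_append, show (b :: a :: R) = [b, a] ++ R from rfl, P_append, mul_assoc]
    _ = proj n (epsWord n) * proj n (FreeMonoid.ofList [b, a]) := by rw [key_perm hp1]

private lemma eps_perm {u v : List (Fin n)} (h : u.Perm v) :
    proj n (epsWord n) * proj n (FreeMonoid.ofList u) =
      proj n (epsWord n) * proj n (FreeMonoid.ofList v) := by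
  induction h with
  | nil => rfl
  | cons x h ih =>
      rename_i l1 l2
      rw [show (x :: l1) = [x] ++ l1 from rfl, show (x :: l2) = [x] ++ l2 from rfl,
        P_append, P_append, ← mul_assoc, ← mul_assoc, central x, mul_assoc, mul_assoc, ih]
  | swap x y l =>
      rw [show (y :: x :: l) = [y, x] ++ l from rfl, show (x :: y :: l) = [x, y] ++ l from rfl,
        P_append, P_append, ← mul_assoc, ← mul_assoc, eps_swap y x]
  | trans _ _ ih1 ih2 => exact ih1.trans ih2

end Aux

/-- If `u` and `v` are words in the generators `x_2, …, x_n` (0-indexed: letters ≠ 0) that are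
rearrangements of each other (each generator occurs the same number of times in both), then
`x_ε · u = x_ε · v` holds in `S_n(Sym_n)`. -/
theorem eps_mul_rearrangement (n : ℕ) (hn : 2 ≤ n) (u v : List (Fin n))
    (hu : ∀ a ∈ u, a.val ≠ 0) (hv : ∀ a ∈ v, a.val ≠ 0)
    (hcount : ∀ i : Fin n, u.count i = v.count i) :
    proj n (epsWord n) * proj n (FreeMonoid.ofList u) =
      proj n (epsWord n) * proj n (FreeMonoid.ofList v) := by
  have hperm : u.Perm v := List.perm_iff_count.mpr hcount
  exact eps_perm hperm
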